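/- Let K be a field of characteristic zero and A, B, Ã, B̃ ∈ K. There exists a unique power series S ∈ K[[x]] with S(0) = 0 and S'(0) = 1 satisfying (B·x⁶ + A·x⁴ + 1)·S'² = 1 + Ã·S⁴ + B̃·S⁶. Moreover S is odd, its coefficient of x³ vanishes, and S = x + ((Ã − A)/10)·x⁵ + ((B̃ − B)/14)·x⁷ + O(x⁹). -/

import Mathlib

open PowerSeries

namespace FastElkiesAux

set_option linter.unusedSectionVars false

variable {K : Type*} [Field K] [CharZero K]

noncomputable def Phi (A B At Bt : K) (S : K⟦X⟧) : K⟦X⟧ :=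
  1 + C At * S ^ 4 + C Bt * S ^ 6
    - (C B * X ^ 6 + C A * X ^ 4 + 1) * (d⁄dX K S) ^ 2

lemma keyL (A B At Bt : K) (S T : K⟦X⟧) (n : ℕ)
    (hST : ∀ i ≤ n, coeff i S = coeff i T)
    (hS1 : coeff 1 S = 1) (hT1 : coeff 1 T = 1) :
    coeff n (Phi A B At Bt S)
      = coeff n (Phi A B At Bt T)
        - 2 * (n + 1) * (coeff (n+1) S - coeff (n+1) T) := by
  obtain ⟨V, hV⟩ : (X : K⟦X⟧)^(n+1) ∣ S - T :=
    X_pow_dvd_iff.mpr fun m hm => by simp [hST m (by omega)]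
  obtain ⟨W, hW⟩ : (X : K⟦X⟧)^n ∣ (d⁄dX K S - d⁄dX K T) :=
    X_pow_dvd_iff.mpr fun m hm => by
      simp [coeff_derivative, hST (m+1) (by omega)]
  have hS : S = T + X^(n+1) * V := by rw [← hV]; ring
  have hdS : d⁄dX K S = d⁄dX K T + X^n * W := by rw [← hW]; ring
  have h4 : coeff n (S^4) = coeff n (T^4) := by
    have : S^4 - T^4 = X^(n+1) * (V * (S^3 + S^2*T + S*T^2 + T^3)) := by
      rw [hS]; ring
    have h0 := X_pow_dvd_iff.mp ⟨_, this⟩ n (Nat.lt_succ_self n)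
    simpa [sub_eq_zero] using h0
  have h6 : coeff n (S^6) = coeff n (T^6) := by
    have : S^6 - T^6 = X^(n+1) * (V * (S^5 + S^4*T + S^3*T^2 + S^2*T^3 + S*T^4 + T^5)) := by
      rw [hS]; ring
    have h0 := X_pow_dvd_iff.mp ⟨_, this⟩ n (Nat.lt_succ_self n)
    simpa [sub_eq_zero] using h0
  set q : K⟦X⟧ := C B * X ^ 6 + C A * X ^ 4 + 1 with hq
  have hW0 : constantCoeff W = (coeff (n+1) S - coeff (n+1) T) * (n+1) := by
    have h1 : coeff n (d⁄dX K S - d⁄dX K T) = coeff 0 W := by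
      rw [hW]
      simpa using coeff_X_pow_mul W n 0
    rw [map_sub, coeff_derivative, coeff_derivative] at h1
    rw [← coeff_zero_eq_constantCoeff, ← h1]; ring
  have hqd : coeff n (q * (d⁄dX K S)^2) - coeff n (q * (d⁄dX K T)^2)
      = 2 * (n + 1) * (coeff (n+1) S - coeff (n+1) T) := by
    have hfac : q * (d⁄dX K S)^2 - q * (d⁄dX K T)^2
        = X^n * (W * (q * (d⁄dX K S + d⁄dX K T))) := by
      rw [hdS]; ring
    have h2 : coeff n (q * (d⁄dX K S)^2 - q * (d⁄dX K T)^2)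
        = coeff 0 (W * (q * (d⁄dX K S + d⁄dX K T))) := by
      rw [hfac]; simpa using coeff_X_pow_mul (W * (q * (d⁄dX K S + d⁄dX K T))) n 0
    rw [map_sub] at h2
    have hq0 : constantCoeff q = 1 := by simp [hq]
    have hdS0 : constantCoeff (d⁄dX K S) = 1 := by
      rw [← coeff_zero_eq_constantCoeff, coeff_derivative]; simp [hS1]
    have hdT0 : constantCoeff (d⁄dX K T) = 1 := by
      rw [← coeff_zero_eq_constantCoeff, coeff_derivative]; simp [hT1]
    rw [h2, coeff_zero_eq_constantCoeff, map_mul, map_mul, hq0, hW0, map_add,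
      hdS0, hdT0]; ring
  simp only [Phi, ← hq, map_add, map_sub, map_mul, map_one, coeff_C_mul]
  rw [h4, h6]
  linear_combination - hqd

noncomputable def sc (A B At Bt : K) : ℕ → K
  | 0 => 0
  | 1 => 1
  | (m+2) =>
      (coeff (m+1) (Phi A B At Bt
        (PowerSeries.mk fun i => if h : i < m + 2 then sc A B At Bt i else 0)))
        / (2 * (m + 2))

lemma uniqL (A B At Bt : K) (S T : K⟦X⟧)
    (hS1 : coeff 1 S = 1) (hSe : Phi A B At Bt S = 0)
    (hT0 : constantCoeff S = constantCoeff T)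
    (hT1 : coeff 1 T = 1) (hTe : Phi A B At Bt T = 0) : S = T := by
  ext n
  induction n using Nat.strong_induction_on with
  | _ n ih =>
    match n with
    | 0 => simpa [coeff_zero_eq_constantCoeff] using hT0
    | 1 => rw [hS1, hT1]
    | (m+2) =>
      have hAg : ∀ i ≤ m+1, coeff i S = coeff i T := fun i hi => ih i (by omega)
      have hk := keyL A B At Bt S T (m+1) hAg hS1 hT1
      rw [hSe, hTe] at hk
      simp only [map_zero] at hk
      push_cast at hk
      norm_num at hk
      rcases hk with h | h
      · exfalso
        have hc : ((m + 2 : ℕ) : K) = 0 := by push_cast; linear_combination h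
        exact Nat.cast_ne_zero.mpr (by omega) hc
      · linear_combination h

lemma exL (A B At Bt : K) :
    constantCoeff (PowerSeries.mk (sc A B At Bt)) = 0 ∧
    coeff 1 (PowerSeries.mk (sc A B At Bt)) = 1 ∧
    Phi A B At Bt (PowerSeries.mk (sc A B At Bt)) = 0 := by
  set S : K⟦X⟧ := PowerSeries.mk (sc A B At Bt) with hSdef
  have c0 : constantCoeff S = 0 := by
    rw [← coeff_zero_eq_constantCoeff, hSdef, coeff_mk]; simp [sc]
  have c1 : coeff 1 S = 1 := by rw [hSdef, coeff_mk]; simp [sc]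
  refine ⟨c0, c1, ?_⟩
  ext n
  rw [map_zero]
  match n with
  | 0 =>
    have cd : constantCoeff (d⁄dX K S) = 1 := by
      rw [← coeff_zero_eq_constantCoeff, coeff_derivative]; simp [c1]
    rw [coeff_zero_eq_constantCoeff]
    simp [Phi, map_add, map_sub, map_mul, map_pow, c0, cd]
  | (m+1) =>
    set P : K⟦X⟧ := PowerSeries.mk fun i => if h : i < m + 2 then sc A B At Bt i else 0
      with hPdef
    have hAg : ∀ i ≤ m+1, coeff i S = coeff i P := by
      intro i hi
      rw [hSdef, hPdef, coeff_mk, coeff_mk, dif_pos (by omega)]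
    have hP1 : coeff 1 P = 1 := by
      rw [hPdef, coeff_mk, dif_pos (by omega)]; simp [sc]
    have hk := keyL A B At Bt S P (m+1) hAg c1 hP1
    have hPm2 : coeff (m+2) P = 0 := by
      rw [hPdef, coeff_mk, dif_neg (by omega)]
    have hSm2 : coeff (m+2) S
        = coeff (m+1) (Phi A B At Bt P) / (2 * ((m : K) + 2)) := by
      rw [hSdef, coeff_mk]
      show sc A B At Bt (m+2) = _
      rw [sc]
    have h2 : (2 * ((m : K) + 2)) ≠ 0 := by
      have : ((2 * (m + 2) : ℕ) : K) ≠ 0 := Nat.cast_ne_zero.mpr (by omega)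
      push_cast at this
      intro hc; exact this (by linear_combination hc)
    rw [hk, hPm2, hSm2]
    have h3 : (m : K) + 2 ≠ 0 := fun hc => h2 (by rw [hc]; ring)
    push_cast
    field_simp
    ring

lemma rescale_C' (a b : K) : rescale a (C b) = C b := by
  ext n
  rw [coeff_rescale]
  cases n with
  | zero => simp
  | succ n => simp [coeff_C]

lemma deriv_rescale (a : K) (f : K⟦X⟧) :
    d⁄dX K (rescale a f) = C a * rescale a (d⁄dX K f) := by
  ext n
  rw [coeff_derivative, coeff_C_mul, coeff_rescale, coeff_rescale, coeff_derivative,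
    pow_succ]
  ring

lemma phi_rescale (A B At Bt : K) (S : K⟦X⟧) :
    Phi A B At Bt (-(rescale (-1) S)) = rescale (-1) (Phi A B At Bt S) := by
  have hd : d⁄dX K (-(rescale (-1) S)) = rescale (-1) (d⁄dX K S) := by
    rw [map_neg, deriv_rescale]
    have : C (-1 : K) = -1 := by rw [map_neg, map_one]
    rw [this]; ring
  have hq : rescale (-1 : K) (C B * X ^ 6 + C A * X ^ 4 + 1)
      = C B * X ^ 6 + C A * X ^ 4 + 1 := by
    rw [map_add, map_add, map_mul, map_mul, map_pow, map_pow, map_one,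
      rescale_neg_one_X, rescale_C', rescale_C']
    ring
  rw [Phi, Phi, map_sub, map_add, map_add, map_one, map_mul, map_mul, map_mul,
    map_pow, map_pow, map_pow, rescale_C', rescale_C', hq, hd]
  ring

lemma propsL (A B At Bt : K) (S : K⟦X⟧) (h0 : constantCoeff S = 0)
    (h1 : coeff 1 S = 1) (he : Phi A B At Bt S = 0) :
    (∀ j, Even j → coeff j S = 0) ∧ coeff 3 S = 0 ∧
      coeff 5 S = (At - A) / 10 ∧ coeff 7 S = (Bt - B) / 14 := by
  -- oddness
  have he0 : coeff 0 S = 0 := by rw [coeff_zero_eq_constantCoeff]; exact h0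
  have hodd : ∀ j, Even j → coeff j S = 0 := by
    have hT0 : constantCoeff S = constantCoeff (-(rescale (-1) S)) := by
      simp [map_neg, ← coeff_zero_eq_constantCoeff, coeff_rescale, he0]
    have hT1 : coeff 1 (-(rescale (-1) S)) = 1 := by
      rw [map_neg, coeff_rescale, h1]; ring
    have hTe : Phi A B At Bt (-(rescale (-1) S)) = 0 := by
      rw [phi_rescale, he, map_zero]
    have hST := uniqL A B At Bt S (-(rescale (-1) S)) h1 he hT0 hT1 hTe
    intro j hj
    have : coeff j S = coeff j (-(rescale (-1) S)) := by rw [← hST]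
    rw [map_neg, coeff_rescale, hj.neg_one_pow, one_mul] at this
    have h2 : (2 : K) ≠ 0 := two_ne_zero
    have : (2 : K) * coeff j S = 0 := by linear_combination this
    exact (mul_eq_zero.mp this).resolve_left h2
  refine ⟨hodd, ?_⟩
  have he2 : coeff 2 S = 0 := hodd 2 ⟨1, rfl⟩
  have he4 : coeff 4 S = 0 := hodd 4 ⟨2, rfl⟩
  have he6 : coeff 6 S = 0 := hodd 6 ⟨3, rfl⟩
  have hmul : ∀ (f g : K⟦X⟧) (n : ℕ), coeff n (f * g)
      = ∑ k ∈ Finset.range (n+1), coeff k f * coeff (n-k) g := fun f g n => by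
    rw [coeff_mul, Finset.Nat.sum_antidiagonal_eq_sum_range_succ_mk]
  -- coefficients of S^2
  have cE0 : coeff 0 (S^2) = 0 := by
    rw [pow_two, hmul]; norm_num [Finset.sum_range_succ, he0]
  have cE1 : coeff 1 (S^2) = 0 := by
    rw [pow_two, hmul]; norm_num [Finset.sum_range_succ, he0]
  have cE2 : coeff 2 (S^2) = 1 := by
    rw [pow_two, hmul]; norm_num [Finset.sum_range_succ, he0, he2, h1]
  have cE3 : coeff 3 (S^2) = 0 := by
    rw [pow_two, hmul]; norm_num [Finset.sum_range_succ, he0, he2]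
  have cE4 : coeff 4 (S^2) = 2 * coeff 3 S := by
    rw [pow_two, hmul]; norm_num [Finset.sum_range_succ, he0, he2, he4, h1]; ring
  have cE5 : coeff 5 (S^2) = 0 := by
    rw [pow_two, hmul]; norm_num [Finset.sum_range_succ, he0, he2, he4]
  have cE6 : coeff 6 (S^2) = 2 * coeff 5 S + coeff 3 S ^ 2 := by
    rw [pow_two, hmul]; norm_num [Finset.sum_range_succ, he0, he2, he4, he6, h1]; ring
  -- coefficients of S^4
  have hS4 : S^4 = S^2 * S^2 := by ring
  have cF0 : coeff 0 (S^4) = 0 := by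
    rw [hS4, hmul]; norm_num [Finset.sum_range_succ, cE0]
  have cF2 : coeff 2 (S^4) = 0 := by
    rw [hS4, hmul]; norm_num [Finset.sum_range_succ, cE0, cE1, cE2]
  have cF4 : coeff 4 (S^4) = 1 := by
    rw [hS4, hmul]; norm_num [Finset.sum_range_succ, cE0, cE1, cE2, cE3, cE4]
  have cF6 : coeff 6 (S^4) = 4 * coeff 3 S := by
    rw [hS4, hmul]; norm_num [Finset.sum_range_succ, cE0, cE1, cE2, cE3, cE4, cE5, cE6]
    ring
  -- coefficients of S^6
  have hS6 : S^6 = S^4 * S^2 := by ring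
  have cF1 : coeff 1 (S^4) = 0 := by
    rw [hS4, hmul]; norm_num [Finset.sum_range_succ, cE0, cE1]
  have cF3 : coeff 3 (S^4) = 0 := by
    rw [hS4, hmul]; norm_num [Finset.sum_range_succ, cE0, cE1, cE2, cE3]
  have cF5 : coeff 5 (S^4) = 0 := by
    rw [hS4, hmul]; norm_num [Finset.sum_range_succ, cE0, cE1, cE2, cE3, cE4, cE5]
  have cG2 : coeff 2 (S^6) = 0 := by
    rw [hS6, hmul]; norm_num [Finset.sum_range_succ, cF0, cF1, cF2, cE0, cE1, cE2]
  have cG4 : coeff 4 (S^6) = 0 := by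
    rw [hS6, hmul]
    norm_num [Finset.sum_range_succ, cF0, cF1, cF2, cF3, cF4, cE0, cE1, cE2, cE3, cE4]
  have cG6 : coeff 6 (S^6) = 1 := by
    rw [hS6, hmul]
    norm_num [Finset.sum_range_succ, cF0, cF1, cF2, cF3, cF4, cF5, cF6,
      cE0, cE1, cE2, cE3, cE4, cE5, cE6]
  -- coefficients of (dS)^2
  have cD0 : coeff 0 ((d⁄dX K S)^2) = 1 := by
    rw [pow_two, hmul]; norm_num [Finset.sum_range_succ, coeff_derivative, h1]
  have cD2 : coeff 2 ((d⁄dX K S)^2) = 6 * coeff 3 S := by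
    rw [pow_two, hmul]
    norm_num [Finset.sum_range_succ, coeff_derivative, h1, he2]; ring
  have cD4 : coeff 4 ((d⁄dX K S)^2)
      = 10 * coeff 5 S + 9 * coeff 3 S ^ 2 := by
    rw [pow_two, hmul]
    norm_num [Finset.sum_range_succ, coeff_derivative, h1, he2, he4]; ring
  have cD6 : coeff 6 ((d⁄dX K S)^2)
      = 14 * coeff 7 S + 30 * coeff 3 S * coeff 5 S := by
    rw [pow_two, hmul]
    norm_num [Finset.sum_range_succ, coeff_derivative, h1, he2, he4, he6]; ring
  -- the equation
  have hEq : (C B * X ^ 6 + C A * X ^ 4 + 1) * (d⁄dX K S) ^ 2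
      = 1 + C At * S ^ 4 + C Bt * S ^ 6 := by
    have h := he; rw [Phi, sub_eq_zero] at h; exact h.symm
  have E2 := congrArg (coeff 2) hEq
  rw [hmul] at E2
  simp only [Finset.sum_range_succ, Finset.sum_range_zero, map_add, coeff_C_mul,
    coeff_X_pow, coeff_one, cF2, cG2] at E2
  rw [cD2] at E2
  norm_num at E2
  have hs3 : coeff 3 S = 0 := E2
  have E4 := congrArg (coeff 4) hEq
  rw [hmul] at E4
  simp only [Finset.sum_range_succ, Finset.sum_range_zero, map_add, coeff_C_mul,
    coeff_X_pow, coeff_one, cF4, cG4] at E4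
  norm_num [cD4, cD0, hs3] at E4
  have hs5 : coeff 5 S = (At - A) / 10 := by
    field_simp
    linear_combination E4
  have E6 := congrArg (coeff 6) hEq
  rw [hmul] at E6
  simp only [Finset.sum_range_succ, Finset.sum_range_zero, map_add, coeff_C_mul,
    coeff_X_pow, coeff_one, cF6, cG6] at E6
  norm_num [cD6, cD2, cD0, hs3] at E6
  have hs7 : coeff 7 S = (Bt - B) / 14 := by
    field_simp
    linear_combination E6
  exact ⟨hs3, hs5, hs7⟩

end FastElkiesAux

open FastElkiesAux in
/-- The central series of the algorithms fastElkies and fastElkies′: over a field of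
characteristic zero there is a unique power series `S` with `S(0) = 0`, `S'(0) = 1` and
`(B·x⁶ + A·x⁴ + 1)·S'² = 1 + Ã·S⁴ + B̃·S⁶`; moreover `S` is odd, its coefficient of
`x³` vanishes, and `S = x + ((Ã−A)/10)·x⁵ + ((B̃−B)/14)·x⁷ + O(x⁹)`. -/
theorem fastElkies_S_exists_unique {K : Type*} [Field K] [CharZero K] (A B At Bt : K) :
    (∃! S : PowerSeries K, constantCoeff S = 0 ∧ coeff 1 S = 1 ∧
      (C B * X ^ 6 + C A * X ^ 4 + 1) * (d⁄dX K S) ^ 2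
        = 1 + C At * S ^ 4 + C Bt * S ^ 6) ∧
    ∀ S : PowerSeries K, constantCoeff S = 0 → coeff 1 S = 1 →
      (C B * X ^ 6 + C A * X ^ 4 + 1) * (d⁄dX K S) ^ 2
        = 1 + C At * S ^ 4 + C Bt * S ^ 6 →
      (∀ j, Even j → coeff j S = 0) ∧ coeff 3 S = 0 ∧
        coeff 5 S = (At - A) / 10 ∧ coeff 7 S = (Bt - B) / 14 := by
  constructor
  · obtain ⟨c0, c1, ce⟩ := exL (K := K) A B At Bt
    refine ⟨PowerSeries.mk (sc A B At Bt), ⟨c0, c1, ?_⟩, ?_⟩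
    · have h := ce; rw [Phi, sub_eq_zero] at h; exact h.symm
    · rintro T ⟨t0, t1, te⟩
      exact uniqL A B At Bt T (PowerSeries.mk (sc A B At Bt)) t1
        (by rw [Phi, sub_eq_zero]; exact te.symm) (by rw [t0, c0]) c1 ce
  · intro S h0 h1 heq
    exact propsL A B At Bt S h0 h1 (by rw [Phi, sub_eq_zero]; exact heq.symm)
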